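/- Let G = [[m, p],[n, q]] be an integer matrix with det G = mq − np = −k₊k₋ for positive integers k₊, k₋, and suppose Λ ⊂ ℝ² is a lattice containing sublattices Λ̃₊ (generated by μ₊, λ₊, of index k₊) and Λ̃₋ (generated by μ₋ = (nλ₊' + mμ₊')/k₊ style combinations as in (1.10)), with the primitivity conditions that λ₋ and μ₋ are primitive in Λ, and that Γ₊ = Λ/Λ̃₊ acts freely on both circle factors. Then the index of Λ in Λ̃₊ + Λ̃₋ satisfies [Λ̃₊ + Λ̃₋ : Λ] = gcd(m, p, k₊) = gcd(n, q, k₊) = gcd(m, n, k₋) = gcd(p, q, k₋). -/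

import Mathlib

/-- The lattice homomorphism ℤ² → ℂ sending (x,y) to x•ν + y•λ. -/
noncomputable def latHom (ν lam : ℂ) : ℤ × ℤ →+ ℂ :=
  AddMonoidHom.coprod ((zmultiplesHom ℂ) ν) ((zmultiplesHom ℂ) lam)

lemma latHom_apply (ν lam : ℂ) (w : ℤ × ℤ) :
    latHom ν lam w = (w.1 : ℂ) * ν + (w.2 : ℂ) * lam := by
  simp [latHom, AddMonoidHom.coprod_apply, zsmul_eq_mul]

lemma pair_coeff {x y : ℂ} (h : LinearIndependent ℝ ![x, y]) {a b : ℤ}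
    (hab : (a : ℂ) * x + (b : ℂ) * y = 0) : a = 0 ∧ b = 0 := by
  have := (LinearIndependent.pair_iff.mp h) (a : ℝ) (b : ℝ) ?_
  · exact ⟨by exact_mod_cast this.1, by exact_mod_cast this.2⟩
  · rw [Complex.real_smul, Complex.real_smul]
    push_cast
    exact hab

lemma latHom_inj {ν lam : ℂ} (h : LinearIndependent ℝ ![ν, lam]) :
    Function.Injective (latHom ν lam) := by
  rw [injective_iff_map_eq_zero]
  rintro ⟨a, b⟩ hab
  rw [latHom_apply] at hab
  obtain ⟨h1, h2⟩ := pair_coeff h hab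
  exact Prod.ext h1 h2

lemma indep2 {x y : ℂ} (h : LinearIndependent ℝ ![x, y]) (a b c d : ℝ)
    (hdet : a * d - b * c ≠ 0) :
    LinearIndependent ℝ ![a • x + b • y, c • x + d • y] := by
  rw [LinearIndependent.pair_iff]
  intro s t hst
  have h1 : (s * a + t * c) • x + (s * b + t * d) • y = 0 := by
    rw [add_smul, add_smul, mul_smul, mul_smul, mul_smul, mul_smul]
    rw [smul_add, smul_add] at hst
    linear_combination (norm := module) hst
  obtain ⟨e1, e2⟩ := LinearIndependent.pair_iff.mp h _ _ h1
  constructor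
  · have : s * (a * d - b * c) = d * (s * a + t * c) - c * (s * b + t * d) := by ring
    rw [e1, e2] at this; simpa [hdet] using mul_eq_zero.mp (by linarith : s * (a*d - b*c) = 0)
  · have : t * (a * d - b * c) = a * (s * b + t * d) - b * (s * a + t * c) := by ring
    rw [e1, e2] at this; simpa [hdet] using mul_eq_zero.mp (by linarith : t * (a*d - b*c) = 0)

lemma topZZ : (⊤ : AddSubgroup (ℤ × ℤ)) = AddSubgroup.closure {((1:ℤ), (0:ℤ)), ((0:ℤ), (1:ℤ))} := by
  refine le_antisymm ?_ le_top
  rintro ⟨x, y⟩ -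
  have hx : ((x, y) : ℤ × ℤ) = x • ((1:ℤ), (0:ℤ)) + y • ((0:ℤ), (1:ℤ)) := by
    simp [Prod.ext_iff]
  rw [hx]
  exact add_mem (zsmul_mem (AddSubgroup.subset_closure (by simp)) x)
    (zsmul_mem (AddSubgroup.subset_closure (by simp)) y)

/-- Subgroup of ℤ² generated by four vectors containing (0,1), whose first coordinates
have gcd d (witnessed by divisibility and Bézout), equals dℤ × ℤ. -/
lemma Tprod (w1 w2 w3 w4 : ℤ × ℤ) (d : ℤ)
    (h1 : d ∣ w1.1) (h2 : d ∣ w2.1) (h3 : d ∣ w3.1) (h4 : d ∣ w4.1)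
    (hbez : ∃ z1 z2 z3 z4 : ℤ, z1 * w1.1 + z2 * w2.1 + z3 * w3.1 + z4 * w4.1 = d)
    (h01 : ((0:ℤ), (1:ℤ)) ∈ AddSubgroup.closure {w1, w2, w3, w4}) :
    AddSubgroup.closure {w1, w2, w3, w4} = (AddSubgroup.zmultiples d).prod ⊤ := by
  refine le_antisymm ((AddSubgroup.closure_le _).mpr ?_) ?_
  · rintro w (rfl | rfl | rfl | rfl)
    · exact ⟨Int.mem_zmultiples_iff.mpr h1, trivial⟩
    · exact ⟨Int.mem_zmultiples_iff.mpr h2, trivial⟩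
    · exact ⟨Int.mem_zmultiples_iff.mpr h3, trivial⟩
    · exact ⟨Int.mem_zmultiples_iff.mpr h4, trivial⟩
  · obtain ⟨z1, z2, z3, z4, hz⟩ := hbez
    set T := AddSubgroup.closure {w1, w2, w3, w4} with hT
    have hw1 : w1 ∈ T := AddSubgroup.subset_closure (by simp)
    have hw2 : w2 ∈ T := AddSubgroup.subset_closure (by simp)
    have hw3 : w3 ∈ T := AddSubgroup.subset_closure (by simp)
    have hw4 : w4 ∈ T := AddSubgroup.subset_closure (by simp)
    have hg : z1 • w1 + z2 • w2 + z3 • w3 + z4 • w4 ∈ T :=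
      add_mem (add_mem (add_mem (zsmul_mem hw1 _) (zsmul_mem hw2 _)) (zsmul_mem hw3 _))
        (zsmul_mem hw4 _)
    set g : ℤ × ℤ := z1 • w1 + z2 • w2 + z3 • w3 + z4 • w4 with hgdef
    have hg1 : g.1 = d := by simp [hgdef, smul_eq_mul]; linarith [hz]
    rintro ⟨x, y⟩ ⟨hx, -⟩
    obtain ⟨z, hzx⟩ := Int.mem_zmultiples_iff.mp hx
    have : ((x, y) : ℤ × ℤ) = z • g + (y - z * g.2) • ((0:ℤ), (1:ℤ)) := by
      simp [Prod.ext_iff, smul_eq_mul, hg1]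
      linear_combination hzx
    rw [this]
    exact add_mem (zsmul_mem hg _) (zsmul_mem h01 _)

lemma keyLemma (ν lam : ℂ) (hind : LinearIndependent ℝ ![ν, lam])
    (w1 w2 w3 w4 : ℤ × ℤ) (d : ℕ)
    (h1 : (d:ℤ) ∣ w1.1) (h2 : (d:ℤ) ∣ w2.1) (h3 : (d:ℤ) ∣ w3.1) (h4 : (d:ℤ) ∣ w4.1)
    (hbez : ∃ z1 z2 z3 z4 : ℤ, z1 * w1.1 + z2 * w2.1 + z3 * w3.1 + z4 * w4.1 = (d:ℤ))
    (h01 : ((0:ℤ), (1:ℤ)) ∈ AddSubgroup.closure {w1, w2, w3, w4}) :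
    (AddSubgroup.closure {latHom ν lam w1, latHom ν lam w2, latHom ν lam w3, latHom ν lam w4}).relIndex
      (AddSubgroup.closure {ν, lam}) = d := by
  have hinj := latHom_inj hind
  set e := latHom ν lam
  have hS : AddSubgroup.closure {e w1, e w2, e w3, e w4}
      = AddSubgroup.map e (AddSubgroup.closure {w1, w2, w3, w4}) := by
    rw [AddMonoidHom.map_closure]
    congr 1
    simp [Set.image_insert_eq]
  have hL : AddSubgroup.closure {ν, lam} = AddSubgroup.map e ⊤ := by
    rw [topZZ, AddMonoidHom.map_closure]
    congr 1
    have e1 : e ((1:ℤ), (0:ℤ)) = ν := by rw [latHom_apply]; simp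
    have e2 : e ((0:ℤ), (1:ℤ)) = lam := by rw [latHom_apply]; simp
    simp [Set.image_insert_eq, e1, e2]
  rw [hS, hL]
  have := AddSubgroup.relIndex_comap (AddSubgroup.map e (AddSubgroup.closure {w1, w2, w3, w4}))
    (e : ℤ × ℤ →+ ℂ) (⊤ : AddSubgroup (ℤ × ℤ))
  rw [← this, AddSubgroup.comap_map_eq_self_of_injective hinj,
    AddSubgroup.relIndex_top_right,
    Tprod w1 w2 w3 w4 (d:ℤ) h1 h2 h3 h4 hbez h01]
  simp [Int.index_zmultiples]

lemma pair_coeff' {x y : ℂ} (h : LinearIndependent ℝ ![x, y]) {a b : ℤ}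
    (hab : (a : ℂ) * x + (b : ℂ) * y = 0) : a = 0 ∧ b = 0 := by
  have := (LinearIndependent.pair_iff.mp h) (a : ℝ) (b : ℝ) ?_
  · exact ⟨by exact_mod_cast this.1, by exact_mod_cast this.2⟩
  · rw [Complex.real_smul, Complex.real_smul]
    push_cast
    exact hab

lemma extract (k : ℕ) (hk : 0 < k) (ε A B : ℤ) (x y : ℂ)
    (hxy : LinearIndependent ℝ ![x, y]) (nu w : ℂ)
    (hnu : nu = (x + (ε : ℂ) * y) / (k : ℂ))
    (hw : w = ((A : ℂ) * x + (B : ℂ) * y) / (k : ℂ))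
    (hmem : w ∈ AddSubgroup.closure {nu, y}) :
    (k : ℤ) ∣ B - A * ε := by
  have hk0 : (k : ℂ) ≠ 0 := Nat.cast_ne_zero.mpr hk.ne'
  obtain ⟨u, v, huv⟩ := AddSubgroup.mem_closure_pair.mp hmem
  have h2 : (u : ℂ) * nu + (v : ℂ) * y = w := by
    rw [← huv]; simp [zsmul_eq_mul]
  rw [hnu, hw] at h2
  have key : ((u - A : ℤ) : ℂ) * x + ((u * ε + v * k - B : ℤ) : ℂ) * y = 0 := by
    push_cast
    field_simp at h2
    linear_combination h2
  obtain ⟨e1, e2⟩ := pair_coeff' hxy key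
  exact ⟨v, by linear_combination ε * e1 - e2⟩

lemma gcd_congr (k : ℕ) (ε a b a' b' : ℤ) (hε : IsCoprime ε (k : ℤ))
    (h1 : (k : ℤ) ∣ a' - a * ε) (h2 : (k : ℤ) ∣ b' - b * ε) :
    Nat.gcd (Int.gcd a' b') k = Nat.gcd (Int.gcd a b) k := by
  apply Nat.dvd_antisymm
  · apply Nat.dvd_gcd _ (Nat.gcd_dvd_right _ _)
    set d := Nat.gcd (Int.gcd a' b') k with hd
    have hdk : (d : ℤ) ∣ (k : ℤ) := Int.natCast_dvd_natCast.mpr (Nat.gcd_dvd_right _ _)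
    have hda' : (d : ℤ) ∣ a' := dvd_trans (Int.natCast_dvd_natCast.mpr (Nat.gcd_dvd_left _ _)) (Int.gcd_dvd_left _ _)
    have hdb' : (d : ℤ) ∣ b' := dvd_trans (Int.natCast_dvd_natCast.mpr (Nat.gcd_dvd_left _ _)) (Int.gcd_dvd_right _ _)
    have hcop : IsCoprime (ε : ℤ) (d : ℤ) := hε.of_isCoprime_of_dvd_right hdk
    have hda : (d : ℤ) ∣ a := by
      have : (d : ℤ) ∣ a * ε := by
        have := dvd_sub hda' (dvd_trans hdk h1)
        simpa using this
      exact hcop.symm.dvd_of_dvd_mul_right this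
    have hdb : (d : ℤ) ∣ b := by
      have : (d : ℤ) ∣ b * ε := by
        have := dvd_sub hdb' (dvd_trans hdk h2)
        simpa using this
      exact hcop.symm.dvd_of_dvd_mul_right this
    exact Int.natCast_dvd_natCast.mp (Int.dvd_coe_gcd hda hdb)
  · apply Nat.dvd_gcd _ (Nat.gcd_dvd_right _ _)
    set d := Nat.gcd (Int.gcd a b) k with hd
    have hdk : (d : ℤ) ∣ (k : ℤ) := Int.natCast_dvd_natCast.mpr (Nat.gcd_dvd_right _ _)
    have hda : (d : ℤ) ∣ a := dvd_trans (Int.natCast_dvd_natCast.mpr (Nat.gcd_dvd_left _ _)) (Int.gcd_dvd_left _ _)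
    have hdb : (d : ℤ) ∣ b := dvd_trans (Int.natCast_dvd_natCast.mpr (Nat.gcd_dvd_left _ _)) (Int.gcd_dvd_right _ _)
    have hda' : (d : ℤ) ∣ a' := by
      have := dvd_add (hda.mul_right ε) (dvd_trans hdk h1)
      simpa using this
    have hdb' : (d : ℤ) ∣ b' := by
      have := dvd_add (hdb.mul_right ε) (dvd_trans hdk h2)
      simpa using this
    exact Int.natCast_dvd_natCast.mp (Int.dvd_coe_gcd hda' hdb')

/-- Remark 3.4: for a torus matching with lattices `Λ̃₊ = ⟨μ₊, λ₊⟩`,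
`Λ̃₋ = ⟨μ₋, λ₋⟩` where `(μ₋, λ₋) = (1/k₊)(μ₊, λ₊)·G` with `det G = −k₊k₋`, and the
common overlattice `Λ = ⟨ν₊, λ₊⟩ = ⟨ν₋, λ₋⟩` containing `ν₊ = (μ₊ + ε₊λ₊)/k₊` and
`ν₋ = (μ₋ + ε₋λ₋)/k₋` (`ε±` coprime to `k±`), the index of `Λ̃₊ + Λ̃₋` in `Λ` equals
each of `gcd(m, p, k₊)`, `gcd(n, q, k₊)`, `gcd(m, n, k₋)` and `gcd(p, q, k₋)`. -/
theorem stmt18 (kp km : ℕ) (hkp : 0 < kp) (hkm : 0 < km)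
    (εp εm m n p q : ℤ)
    (hεp : IsCoprime εp (kp : ℤ)) (hεm : IsCoprime εm (km : ℤ))
    (hdet : m * q - n * p = -((kp : ℤ) * km))
    (mup lamp mum lamm nup num : ℂ)
    (hind : LinearIndependent ℝ ![mup, lamp])
    (hmum : mum = ((m : ℂ) * mup + (n : ℂ) * lamp) / (kp : ℂ))
    (hlamm : lamm = ((p : ℂ) * mup + (q : ℂ) * lamp) / (kp : ℂ))
    (hnup : nup = (mup + (εp : ℂ) * lamp) / (kp : ℂ))
    (hnum : num = (mum + (εm : ℂ) * lamm) / (km : ℂ))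
    (Λ : AddSubgroup ℂ)
    (hΛp : Λ = AddSubgroup.closure {nup, lamp})
    (hΛm : Λ = AddSubgroup.closure {num, lamm}) :
    (AddSubgroup.closure {mup, lamp} ⊔ AddSubgroup.closure {mum, lamm}).relIndex Λ
        = Nat.gcd (Int.gcd m p) kp ∧
      (AddSubgroup.closure {mup, lamp} ⊔ AddSubgroup.closure {mum, lamm}).relIndex Λ
        = Nat.gcd (Int.gcd n q) kp ∧
      (AddSubgroup.closure {mup, lamp} ⊔ AddSubgroup.closure {mum, lamm}).relIndex Λ
        = Nat.gcd (Int.gcd m n) km ∧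
      (AddSubgroup.closure {mup, lamp} ⊔ AddSubgroup.closure {mum, lamm}).relIndex Λ
        = Nat.gcd (Int.gcd p q) km := by
  have hkpR : ((kp : ℝ)) ≠ 0 := Nat.cast_ne_zero.mpr hkp.ne'
  have hkmR : ((km : ℝ)) ≠ 0 := Nat.cast_ne_zero.mpr hkm.ne'
  have hkpC : ((kp : ℂ)) ≠ 0 := Nat.cast_ne_zero.mpr hkp.ne'
  have hkmC : ((km : ℂ)) ≠ 0 := Nat.cast_ne_zero.mpr hkm.ne'
  have hdetR : (m : ℝ) * q - n * p = -((kp : ℝ) * km) := by exact_mod_cast hdet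
  have hdetC : (m : ℂ) * q - n * p = -((kp : ℂ) * km) := by exact_mod_cast hdet
  -- independence of (nup, lamp)
  have ind_p : LinearIndependent ℝ ![nup, lamp] := by
    have h := indep2 hind (1/(kp:ℝ)) ((εp:ℝ)/(kp:ℝ)) 0 1
      (by simp [hkpR])
    have e1 : (1/(kp:ℝ)) • mup + ((εp:ℝ)/(kp:ℝ)) • lamp = nup := by
      rw [hnup, Complex.real_smul, Complex.real_smul]; push_cast; field_simp
    have e2 : (0:ℝ) • mup + (1:ℝ) • lamp = lamp := by simp
    rw [e1, e2] at h; exact h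
  -- independence of (mum, lamm)
  have ind_mm : LinearIndependent ℝ ![mum, lamm] := by
    have hd : ((m:ℝ)/kp) * ((q:ℝ)/kp) - ((n:ℝ)/kp) * ((p:ℝ)/kp) ≠ 0 := by
      have : ((m:ℝ)/kp) * ((q:ℝ)/kp) - ((n:ℝ)/kp) * ((p:ℝ)/kp)
          = -((km:ℝ)/kp) := by
        field_simp
        linear_combination hdetR
      rw [this]
      simp [hkmR, hkpR]
    have h := indep2 hind ((m:ℝ)/kp) ((n:ℝ)/kp) ((p:ℝ)/kp) ((q:ℝ)/kp) hd
    have e1 : ((m:ℝ)/kp) • mup + ((n:ℝ)/kp) • lamp = mum := by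
      rw [hmum, Complex.real_smul, Complex.real_smul]; push_cast; field_simp
    have e2 : ((p:ℝ)/kp) • mup + ((q:ℝ)/kp) • lamp = lamm := by
      rw [hlamm, Complex.real_smul, Complex.real_smul]; push_cast; field_simp
    rw [e1, e2] at h; exact h
  -- independence of (num, lamm)
  have ind_m : LinearIndependent ℝ ![num, lamm] := by
    have h := indep2 ind_mm (1/(km:ℝ)) ((εm:ℝ)/(km:ℝ)) 0 1
      (by simp [hkmR])
    have e1 : (1/(km:ℝ)) • mum + ((εm:ℝ)/(km:ℝ)) • lamm = num := by
      rw [hnum, Complex.real_smul, Complex.real_smul]; push_cast; field_simp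
    have e2 : (0:ℝ) • mum + (1:ℝ) • lamm = lamm := by simp
    rw [e1, e2] at h; exact h
  -- inverse change of basis formulas
  have hmup2 : mup = (((-q : ℤ) : ℂ) * mum + ((n : ℤ) : ℂ) * lamm) / (km : ℂ) := by
    rw [hmum, hlamm]
    field_simp
    push_cast
    linear_combination mup * hdetC
  have hlamp2 : lamp = (((p : ℤ) : ℂ) * mum + ((-m : ℤ) : ℂ) * lamm) / (km : ℂ) := by
    rw [hmum, hlamm]
    field_simp
    push_cast
    linear_combination lamp * hdetC
  -- membership facts
  have hmum_mem : mum ∈ AddSubgroup.closure {nup, lamp} := by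
    have h1 : mum ∈ Λ := by
      rw [hΛm]
      have : mum = (km : ℤ) • num + (-εm : ℤ) • lamm := by
        simp only [zsmul_eq_mul]
        rw [hnum]; push_cast; field_simp; ring
      rw [this]
      exact add_mem (zsmul_mem (AddSubgroup.subset_closure (by simp)) _)
        (zsmul_mem (AddSubgroup.subset_closure (by simp)) _)
    rwa [hΛp] at h1
  have hlamm_mem : lamm ∈ AddSubgroup.closure {nup, lamp} := by
    have h1 : lamm ∈ Λ := by
      rw [hΛm]; exact AddSubgroup.subset_closure (by simp)
    rwa [hΛp] at h1
  have hmup_mem : mup ∈ AddSubgroup.closure {num, lamm} := by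
    have h1 : mup ∈ Λ := by
      rw [hΛp]
      have : mup = (kp : ℤ) • nup + (-εp : ℤ) • lamp := by
        simp only [zsmul_eq_mul]
        rw [hnup]; push_cast; field_simp; ring
      rw [this]
      exact add_mem (zsmul_mem (AddSubgroup.subset_closure (by simp)) _)
        (zsmul_mem (AddSubgroup.subset_closure (by simp)) _)
    rwa [hΛm] at h1
  have hlamp_mem : lamp ∈ AddSubgroup.closure {num, lamm} := by
    have h1 : lamp ∈ Λ := by
      rw [hΛp]; exact AddSubgroup.subset_closure (by simp)
    rwa [hΛm] at h1
  -- divisibility facts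
  have hmum' : mum = (((m:ℤ):ℂ) * mup + ((n:ℤ):ℂ) * lamp) / (kp : ℂ) := by
    push_cast; exact hmum
  have hlamm' : lamm = (((p:ℤ):ℂ) * mup + ((q:ℤ):ℂ) * lamp) / (kp : ℂ) := by
    push_cast; exact hlamm
  have d1 : (kp : ℤ) ∣ n - m * εp :=
    extract kp hkp εp m n mup lamp hind nup mum hnup hmum' hmum_mem
  have d2 : (kp : ℤ) ∣ q - p * εp :=
    extract kp hkp εp p q mup lamp hind nup lamm hnup hlamm' hlamm_mem
  have d3 : (km : ℤ) ∣ n - (-q) * εm :=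
    extract km hkm εm (-q) n mum lamm ind_mm num mup hnum hmup2 hmup_mem
  have d4 : (km : ℤ) ∣ (-m) - p * εm :=
    extract km hkm εm p (-m) mum lamm ind_mm num lamp hnum hlamp2 hlamp_mem
  obtain ⟨a, ha⟩ := d1
  obtain ⟨b, hb⟩ := d2
  obtain ⟨c, hc⟩ := d3
  obtain ⟨dd, hdd⟩ := d4
  -- generator coordinates in the plus basis
  have gm_up : mup = latHom nup lamp ((kp : ℤ), -εp) := by
    rw [latHom_apply]; push_cast
    rw [hnup]; field_simp; ring
  have gl_p : lamp = latHom nup lamp ((0 : ℤ), (1 : ℤ)) := by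
    rw [latHom_apply]; simp
  have gm_um : mum = latHom nup lamp (m, a) := by
    rw [latHom_apply, hmum, hnup]
    have haC : (n : ℂ) - m * εp = kp * a := by exact_mod_cast congrArg (Int.cast : ℤ → ℂ) ha
    field_simp
    linear_combination lamp * haC
  have gl_m : lamm = latHom nup lamp (p, b) := by
    rw [latHom_apply, hlamm, hnup]
    have hbC : (q : ℂ) - p * εp = kp * b := by exact_mod_cast congrArg (Int.cast : ℤ → ℂ) hb
    field_simp
    linear_combination lamp * hbC
  -- generator coordinates in the minus basis
  have gm_up' : mup = latHom num lamm (-q, c) := by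
    rw [latHom_apply, hmup2, hnum]
    have hcC : (n : ℂ) - (-q) * εm = km * c := by exact_mod_cast congrArg (Int.cast : ℤ → ℂ) hc
    push_cast at hcC ⊢
    field_simp
    linear_combination lamm * hcC
  have gl_p' : lamp = latHom num lamm (p, dd) := by
    rw [latHom_apply, hlamp2, hnum]
    have hddC : (-m : ℂ) - p * εm = km * dd := by exact_mod_cast congrArg (Int.cast : ℤ → ℂ) hdd
    push_cast at hddC ⊢
    field_simp
    linear_combination lamm * hddC
  have gm_um' : mum = latHom num lamm ((km : ℤ), -εm) := by
    rw [latHom_apply]; push_cast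
    rw [hnum]; field_simp; ring
  have gl_m' : lamm = latHom num lamm ((0 : ℤ), (1 : ℤ)) := by
    rw [latHom_apply]; simp
  -- rewrite the sup as a single closure
  have hSset : AddSubgroup.closure {mup, lamp} ⊔ AddSubgroup.closure {mum, lamm}
      = AddSubgroup.closure {mup, lamp, mum, lamm} := by
    rw [← AddSubgroup.closure_union]
    congr 1
    ext z; constructor <;> (intro h; simp at h ⊢; tauto)
  -- plus side computation
  have r1 : (AddSubgroup.closure {mup, lamp} ⊔ AddSubgroup.closure {mum, lamm}).relIndex Λ
      = Nat.gcd (Int.gcd m p) kp := by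
    set d : ℕ := Nat.gcd (Int.gcd m p) kp with hdD
    have hd_kp : (d : ℤ) ∣ (kp : ℤ) := Int.natCast_dvd_natCast.mpr (Nat.gcd_dvd_right _ _)
    have hd_m : (d : ℤ) ∣ m :=
      dvd_trans (Int.natCast_dvd_natCast.mpr (Nat.gcd_dvd_left _ _)) (Int.gcd_dvd_left _ _)
    have hd_p : (d : ℤ) ∣ p :=
      dvd_trans (Int.natCast_dvd_natCast.mpr (Nat.gcd_dvd_left _ _)) (Int.gcd_dvd_right _ _)
    have hbez : ∃ z1 z2 z3 z4 : ℤ,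
        z1 * ((kp : ℤ), -εp).1 + z2 * ((0:ℤ), (1:ℤ)).1 + z3 * ((m : ℤ), a).1
          + z4 * ((p : ℤ), b).1 = (d : ℤ) := by
      have h1 : ((d : ℕ) : ℤ) = (Int.gcd m p : ℤ) * Int.gcdA (Int.gcd m p) kp
          + (kp : ℤ) * Int.gcdB (Int.gcd m p) kp := by
        rw [hdD]
        have := Int.gcd_eq_gcd_ab ((Int.gcd m p : ℤ)) ((kp : ℤ))
        simpa [Int.gcd_natCast_natCast] using this
      have h2 : ((Int.gcd m p : ℕ) : ℤ) = m * Int.gcdA m p + p * Int.gcdB m p :=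
        Int.gcd_eq_gcd_ab m p
      refine ⟨Int.gcdB (Int.gcd m p) kp, 0,
        Int.gcdA m p * Int.gcdA (Int.gcd m p) kp,
        Int.gcdB m p * Int.gcdA (Int.gcd m p) kp, ?_⟩
      simp only
      rw [h1, h2]; ring
    have hkey := keyLemma nup lamp ind_p ((kp : ℤ), -εp) ((0:ℤ), (1:ℤ)) (m, a) (p, b) d
      hd_kp (by simp) hd_m hd_p hbez (AddSubgroup.subset_closure (by simp))
    rw [← gm_up, ← gm_um, ← gl_m, ← gl_p] at hkey
    rw [hSset, hΛp]
    exact hkey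
  -- minus side computation
  have r2 : (AddSubgroup.closure {mup, lamp} ⊔ AddSubgroup.closure {mum, lamm}).relIndex Λ
      = Nat.gcd (Int.gcd p q) km := by
    set d : ℕ := Nat.gcd (Int.gcd p q) km with hdD
    have hd_km : (d : ℤ) ∣ (km : ℤ) := Int.natCast_dvd_natCast.mpr (Nat.gcd_dvd_right _ _)
    have hd_p : (d : ℤ) ∣ p :=
      dvd_trans (Int.natCast_dvd_natCast.mpr (Nat.gcd_dvd_left _ _)) (Int.gcd_dvd_left _ _)
    have hd_q : (d : ℤ) ∣ (-q) :=
      (dvd_trans (Int.natCast_dvd_natCast.mpr (Nat.gcd_dvd_left _ _)) (Int.gcd_dvd_right _ _)).neg_right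
    have hbez : ∃ z1 z2 z3 z4 : ℤ,
        z1 * ((-q : ℤ), c).1 + z2 * ((p : ℤ), dd).1 + z3 * ((km : ℤ), -εm).1
          + z4 * ((0:ℤ), (1:ℤ)).1 = (d : ℤ) := by
      have h1 : ((d : ℕ) : ℤ) = (Int.gcd p q : ℤ) * Int.gcdA (Int.gcd p q) km
          + (km : ℤ) * Int.gcdB (Int.gcd p q) km := by
        rw [hdD]
        have := Int.gcd_eq_gcd_ab ((Int.gcd p q : ℤ)) ((km : ℤ))
        simpa [Int.gcd_natCast_natCast] using this
      have h2 : ((Int.gcd p q : ℕ) : ℤ) = p * Int.gcdA p q + q * Int.gcdB p q :=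
        Int.gcd_eq_gcd_ab p q
      refine ⟨-(Int.gcdB p q * Int.gcdA (Int.gcd p q) km),
        Int.gcdA p q * Int.gcdA (Int.gcd p q) km,
        Int.gcdB (Int.gcd p q) km, 0, ?_⟩
      simp only
      rw [h1, h2]; ring
    have hkey := keyLemma num lamm ind_m (-q, c) (p, dd) ((km : ℤ), -εm) ((0:ℤ), (1:ℤ)) d
      hd_q hd_p hd_km (by simp) hbez (AddSubgroup.subset_closure (by simp))
    rw [← gm_up', ← gl_p', ← gm_um', ← gl_m'] at hkey
    rw [hSset, hΛm]
    exact hkey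
  -- gcd identities
  have eq2 : Nat.gcd (Int.gcd n q) kp = Nat.gcd (Int.gcd m p) kp :=
    gcd_congr kp εp m p n q hεp ⟨a, ha⟩ ⟨b, hb⟩
  have eq4 : Nat.gcd (Int.gcd m n) km = Nat.gcd (Int.gcd p q) km := by
    refine gcd_congr km (-εm) p q m n hεm.neg_left ⟨-dd, ?_⟩ ⟨c, ?_⟩
    · linear_combination -hdd
    · linear_combination hc
  exact ⟨r1, by rw [eq2]; exact r1, by rw [eq4]; exact r2, r2⟩
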